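/- Let M(X) = (m_x(X−x)+1)((X−u)/(x−u))²·y + (m_u(X−u)+1)((X−x)/(u−x))²·v with m_x = F'(x)/(2F(x)) − 2/(x−u) and m_u = F'(u)/(2F(u)) − 2/(u−x). Then the polynomial F(X) − M(X)² and its derivative both vanish at X = x and at X = u; i.e. (X−x)²(X−u)² divides F(X) − M(X)². -/

import Mathlib

open Polynomial

lemma sq_dvd_of_root_of_deriv {K : Type*} [Field K] (p : K[X]) (a : K)
    (h0 : p.eval a = 0) (h1 : p.derivative.eval a = 0) : (X - C a) ^ 2 ∣ p := by
  obtain ⟨q, hq⟩ := (dvd_iff_isRoot (p := p) (a := a)).2 h0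
  have hq' : q.eval a = 0 := by
    have := congrArg (fun r => Polynomial.eval a (Polynomial.derivative r)) hq
    simp at this
    simpa [this] using h1
  obtain ⟨r, hr⟩ := (dvd_iff_isRoot (p := q) (a := a)).2 hq'
  exact ⟨r, by rw [hq, hr]; ring⟩

/-- with `m_x = F'(x)/(2F(x)) − 2/(x−u)`, `m_u = F'(u)/(2F(u)) − 2/(u−x)`
and the stated cubic `M`, the polynomial `F − M²` and its derivative vanish at `x` and
`u`; i.e. `(X−x)²(X−u)²` divides `F − M²`. -/
theorem stmt18 {K : Type*} [Field K] (hchar : (2 : K) ≠ 0)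
    (F : K[X]) (hFdeg : F.natDegree = 6)
    (x u y v : K) (hxu : x ≠ u) (hFx : F.eval x ≠ 0) (hFu : F.eval u ≠ 0)
    (hy : y ^ 2 = F.eval x) (hv : v ^ 2 = F.eval u)
    (mx mu : K)
    (hmx : mx = (F.derivative.eval x) / (2 * F.eval x) - 2 / (x - u))
    (hmu : mu = (F.derivative.eval u) / (2 * F.eval u) - 2 / (u - x))
    (M : K[X])
    (hM : M = (C mx * (X - C x) + 1) * (C ((x - u)⁻¹) * (X - C u)) ^ 2 * C y +
              (C mu * (X - C u) + 1) * (C ((u - x)⁻¹) * (X - C x)) ^ 2 * C v) :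
    ((F - M ^ 2).eval x = 0 ∧ (F - M ^ 2).eval u = 0 ∧
        ((F - M ^ 2).derivative.eval x = 0 ∧ (F - M ^ 2).derivative.eval u = 0)) ∧
      (X - C x) ^ 2 * (X - C u) ^ 2 ∣ F - M ^ 2 := by
  have hd : x - u ≠ 0 := sub_ne_zero.2 hxu
  have hd' : u - x ≠ 0 := sub_ne_zero.2 (Ne.symm hxu)
  have hyne : y ≠ 0 := by intro h; rw [h] at hy; simp at hy; exact hFx hy.symm
  have hvne : v ≠ 0 := by intro h; rw [h] at hv; simp at hv; exact hFu hv.symm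
  have hMx : M.eval x = y := by
    simp [hM, hd, hd']
  have hMu : M.eval u = v := by
    simp [hM, hd, hd']
  have e1 : (F - M ^ 2).eval x = 0 := by simp [hMx, ← hy]
  have e2 : (F - M ^ 2).eval u = 0 := by simp [hMu, ← hv]
  have hM'x : (derivative M).eval x = F.derivative.eval x / (2 * y) := by
    simp [hM, derivative_mul, derivative_pow, hmx, hd, hd']
    rw [← hy]
    field_simp
    ring
  have hM'u : (derivative M).eval u = F.derivative.eval u / (2 * v) := by
    simp [hM, derivative_mul, derivative_pow, hmu, hd, hd']
    rw [← hv]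
    field_simp
    ring
  have hder : (F - M ^ 2).derivative = F.derivative - C 2 * M * derivative M := by
    simp [derivative_sub, derivative_pow]
  have e3 : (F - M ^ 2).derivative.eval x = 0 := by
    rw [hder]
    simp [hMx, hM'x]
    field_simp
    ring
  have e4 : (F - M ^ 2).derivative.eval u = 0 := by
    rw [hder]
    simp [hMu, hM'u]
    field_simp
    ring

  refine ⟨⟨e1, e2, e3, e4⟩, ?_⟩
  have c1 := sq_dvd_of_root_of_deriv (F - M ^ 2) x e1 e3
  have c2 := sq_dvd_of_root_of_deriv (F - M ^ 2) u e2 e4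
  have hcop : IsCoprime ((X - C x) ^ 2) ((X - C u) ^ 2) :=
    (Polynomial.isCoprime_X_sub_C_of_isUnit_sub (by simpa using hd)).pow
  exact hcop.mul_dvd c1 c2
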